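/- Let λ, μ > 0 with ρ = λ/μ < 1, and let i ≥ 0 be an integer. Then for all t > 0, the function EL_i defined by the explicit integral formula satisfies d/dt EL_i(t) = λ − μ·(1 − p_{i0}(t)), where p_{i0}(t) = (2/π)·ρ^{−i/2}·∫₀^π e^{−μ t γ(y)}/γ(y) · a_i(y)·a_0(y) dy + (1−ρ). -/

import Mathlib

open Real MeasureTheory Set Filter

/-- γ(y) = 1 + ρ − 2√ρ·cos(y). -/
noncomputable def gam (ρ y : ℝ) : ℝ := 1 + ρ - 2 * Real.sqrt ρ * Real.cos y

/-- a_k(y) = sin(k·y) − √ρ·sin((k+1)·y). -/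
noncomputable def aco (ρ : ℝ) (k : ℕ) (y : ℝ) : ℝ :=
  Real.sin ((k : ℝ) * y) - Real.sqrt ρ * Real.sin (((k : ℝ) + 1) * y)

/-- Transient expected queue length of an M/M/1 queue started with `i` customers. -/
noncomputable def EL (lam mu : ℝ) (i : ℕ) (t : ℝ) : ℝ :=
  (2 / Real.pi) * (lam / mu) ^ ((1 - (i : ℝ)) / 2) *
    (∫ y in (0 : ℝ)..Real.pi,
      Real.exp (-(mu * t * gam (lam / mu) y)) / (gam (lam / mu) y) ^ 2 *
        (aco (lam / mu) i y * Real.sin y)) +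
  (lam / mu) / (1 - lam / mu)

/-- Transient probability that an M/M/1 queue started with `i` customers has `j` at time `t`. -/
noncomputable def pq (lam mu : ℝ) (i j : ℕ) (t : ℝ) : ℝ :=
  (2 / Real.pi) * (lam / mu) ^ (((j : ℝ) - (i : ℝ)) / 2) *
    (∫ y in (0 : ℝ)..Real.pi,
      Real.exp (-(mu * t * gam (lam / mu) y)) / gam (lam / mu) y *
        (aco (lam / mu) i y * aco (lam / mu) j y)) +
  (1 - lam / mu) * (lam / mu) ^ j


lemma gam_ge {ρ : ℝ} (h0 : 0 ≤ ρ) (y : ℝ) : (1 - Real.sqrt ρ)^2 ≤ gam ρ y := by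
  have hs : Real.sqrt ρ ^ 2 = ρ := Real.sq_sqrt h0
  have hc : Real.cos y ≤ 1 := Real.cos_le_one y
  have hs0 : 0 ≤ Real.sqrt ρ := Real.sqrt_nonneg ρ
  unfold gam
  nlinarith [mul_nonneg hs0 (sub_nonneg.2 hc)]

lemma gam_pos {ρ : ℝ} (h0 : 0 ≤ ρ) (h1 : ρ < 1) (y : ℝ) : 0 < gam ρ y := by
  have hs1 : Real.sqrt ρ < 1 := by
    rw [show (1:ℝ) = Real.sqrt 1 by simp]
    exact Real.sqrt_lt_sqrt h0 h1
  have := gam_ge h0 y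
  nlinarith

lemma gam_cont (ρ : ℝ) : Continuous (gam ρ) := by unfold gam; continuity

lemma aco_cont (ρ : ℝ) (i : ℕ) : Continuous (aco ρ i) := by unfold aco; continuity

lemma aco_abs_le {ρ : ℝ} (h0 : 0 ≤ ρ) (i : ℕ) (y : ℝ) :
    |aco ρ i y| ≤ 1 + Real.sqrt ρ := by
  unfold aco
  calc |Real.sin ((i:ℝ)*y) - Real.sqrt ρ * Real.sin (((i:ℝ)+1)*y)|
      ≤ |Real.sin ((i:ℝ)*y)| + |Real.sqrt ρ * Real.sin (((i:ℝ)+1)*y)| := abs_sub _ _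
    _ ≤ 1 + Real.sqrt ρ := by
        rw [abs_mul, abs_of_nonneg (Real.sqrt_nonneg ρ)]
        have h1 := Real.abs_sin_le_one ((i:ℝ)*y)
        have h2 := Real.abs_sin_le_one (((i:ℝ)+1)*y)
        nlinarith [Real.sqrt_nonneg ρ, abs_nonneg (Real.sin (((i:ℝ)+1)*y))]

lemma hasDerivAt_I (ρ mu : ℝ) (h0 : 0 < ρ) (h1 : ρ < 1) (hmu : 0 < mu)
    (i : ℕ) (t : ℝ) (ht : 0 < t) :
    HasDerivAt (fun s : ℝ => ∫ y in (0:ℝ)..Real.pi,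
        Real.exp (-(mu * s * gam ρ y)) / (gam ρ y) ^ 2 * (aco ρ i y * Real.sin y))
      (∫ y in (0:ℝ)..Real.pi,
        -mu * (Real.exp (-(mu * t * gam ρ y)) / gam ρ y * (aco ρ i y * Real.sin y))) t := by
  have hγ : ∀ y, 0 < gam ρ y := gam_pos h0.le h1
  have hge := gam_ge h0.le
  have hs1 : Real.sqrt ρ < 1 := by
    rw [show (1:ℝ) = Real.sqrt 1 by simp]
    exact Real.sqrt_lt_sqrt h0.le h1
  have hcpos : (0:ℝ) < (1 - Real.sqrt ρ)^2 := pow_pos (by linarith) 2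
  have contF : ∀ s : ℝ, Continuous (fun y =>
      Real.exp (-(mu * s * gam ρ y)) / (gam ρ y) ^ 2 * (aco ρ i y * Real.sin y)) := by
    intro s
    apply Continuous.mul
    · exact (Real.continuous_exp.comp (continuous_const.mul (gam_cont ρ)).neg).div
        ((gam_cont ρ).pow 2) (fun y => pow_ne_zero 2 (hγ y).ne')
    · exact (aco_cont ρ i).mul Real.continuous_sin
  have contF' : Continuous (fun y =>
      -mu * (Real.exp (-(mu * t * gam ρ y)) / gam ρ y * (aco ρ i y * Real.sin y))) := by
    apply Continuous.mul continuous_const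
    apply Continuous.mul
    · exact (Real.continuous_exp.comp (continuous_const.mul (gam_cont ρ)).neg).div
        (gam_cont ρ) (fun y => (hγ y).ne')
    · exact (aco_cont ρ i).mul Real.continuous_sin
  refine (intervalIntegral.hasDerivAt_integral_of_dominated_loc_of_deriv_le
    (F := fun s y => Real.exp (-(mu * s * gam ρ y)) / (gam ρ y) ^ 2 * (aco ρ i y * Real.sin y))
    (F' := fun s y => -mu * (Real.exp (-(mu * s * gam ρ y)) / gam ρ y * (aco ρ i y * Real.sin y)))
    (bound := fun _ => mu * (1 / (1 - Real.sqrt ρ)^2 * (1 + Real.sqrt ρ)))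
    (Metric.ball_mem_nhds t (half_pos ht)) ?_ ?_ ?_ ?_ ?_ ?_).2
  · exact Eventually.of_forall fun s => (contF s).aestronglyMeasurable
  · exact (contF t).intervalIntegrable _ _
  · exact contF'.aestronglyMeasurable
  · refine Eventually.of_forall fun y _ => fun x hx => ?_
    have hxpos : 0 < x := by
      have : |x - t| < t/2 := by simpa [Real.dist_eq] using hx
      have := abs_lt.1 this
      linarith [this.1]
    have hE1 : Real.exp (-(mu * x * gam ρ y)) ≤ 1 := by
      rw [Real.exp_le_one_iff]
      have : 0 ≤ mu * x * gam ρ y := (mul_pos (mul_pos hmu hxpos) (hγ y)).le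
      linarith
    have hEpos := Real.exp_pos (-(mu * x * gam ρ y))
    rw [norm_mul, norm_neg, Real.norm_eq_abs, Real.norm_eq_abs, abs_of_pos hmu]
    apply mul_le_mul_of_nonneg_left _ hmu.le
    rw [abs_mul, abs_div, abs_of_pos hEpos, abs_of_pos (hγ y)]
    have hd : Real.exp (-(mu * x * gam ρ y)) / gam ρ y ≤ 1 / (1 - Real.sqrt ρ)^2 :=
      div_le_div₀ (by norm_num) hE1 hcpos (hge y)
    have habs : |aco ρ i y * Real.sin y| ≤ 1 + Real.sqrt ρ := by
      rw [abs_mul]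
      have := mul_le_mul (aco_abs_le h0.le i y) (Real.abs_sin_le_one y)
          (abs_nonneg _) (by positivity)
      simpa using this
    exact mul_le_mul hd habs (abs_nonneg _) (by positivity)
  · exact intervalIntegrable_const
  · refine Eventually.of_forall fun y _ => fun x hx => ?_
    have hinner : HasDerivAt (fun s : ℝ => -(mu * s * gam ρ y)) (-(mu * gam ρ y)) x := by
      have : (fun s : ℝ => -(mu * s * gam ρ y)) = fun s => -((mu * gam ρ y) * s) := by
        ext s; ring
      rw [this]
      exact HasDerivAt.congr_deriv (((hasDerivAt_id' x).const_mul (mu * gam ρ y)).neg) (by ring)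
    have h2 := ((hinner.exp.div_const ((gam ρ y)^2)).mul_const (aco ρ i y * Real.sin y))
    refine h2.congr_deriv ?_
    have := (hγ y).ne'
    field_simp

/-- Erlang(n) density with rate `mu`: f_n(t) = μⁿ t^{n−1} e^{−μt}/(n−1)!. -/
noncomputable def erl (mu : ℝ) (n : ℕ) (t : ℝ) : ℝ :=
  mu ^ n * t ^ (n - 1) * Real.exp (-(mu * t)) / (Nat.factorial (n - 1) : ℝ)

/-- Expected total time to complete queue with `a` customers first, then queue with `b`. -/
noncomputable def ETT (lam mu : ℝ) (a b : ℕ) : ℝ :=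
  ((a : ℝ) + 2) / mu + (1 / mu) * ∫ t in Set.Ioi (0 : ℝ), erl mu (a + 1) t * EL lam mu b t

open Metric in
/-- For t > 0, d/dt EL_i(t) = λ − μ·(1 − p_{i0}(t)). -/
theorem EL_deriv (lam mu : ℝ) (hlam : 0 < lam) (hmu : 0 < mu)
    (hρ : lam / mu < 1) (i : ℕ) :
    ∀ t : ℝ, 0 < t →
      HasDerivAt (fun s : ℝ => EL lam mu i s)
        (lam - mu * (1 - pq lam mu i 0 t)) t := by
  intro t ht
  have h0 : 0 < lam / mu := div_pos hlam hmu
  set ρ := lam / mu with hρdef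
  have hγ : ∀ y, 0 < gam ρ y := gam_pos h0.le hρ
  set J := ∫ y in (0:ℝ)..Real.pi,
      Real.exp (-(mu * t * gam ρ y)) / gam ρ y * (aco ρ i y * Real.sin y) with hJ
  have hkey := hasDerivAt_I ρ mu h0 hρ hmu i t ht
  have hIJ : (∫ y in (0:ℝ)..Real.pi,
      -mu * (Real.exp (-(mu * t * gam ρ y)) / gam ρ y * (aco ρ i y * Real.sin y)))
      = -mu * J := intervalIntegral.integral_const_mul _ _
  rw [hIJ] at hkey
  have hmain : HasDerivAt (fun s : ℝ => EL lam mu i s)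
      ((2 / Real.pi) * ρ ^ ((1 - (i : ℝ)) / 2) * (-mu * J)) t := by
    simp only [EL]
    exact (hkey.const_mul _).add_const _
  convert hmain using 1
  -- algebra
  have hJ0 : (∫ y in (0:ℝ)..Real.pi,
      Real.exp (-(mu * t * gam ρ y)) / gam ρ y * (aco ρ i y * aco ρ 0 y))
      = -Real.sqrt ρ * J := by
    rw [hJ, ← intervalIntegral.integral_const_mul]
    apply intervalIntegral.integral_congr
    intro y _
    simp only [aco, Nat.cast_zero, zero_mul, Real.sin_zero, zero_add, one_mul, zero_sub]
    ring
  have hBA : ρ ^ (-((i:ℝ) / 2)) * Real.sqrt ρ = ρ ^ ((1 - (i:ℝ)) / 2) := by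
    rw [Real.sqrt_eq_rpow, ← Real.rpow_add h0]
    congr 1
    ring
  have hml : mu * ρ = lam := by rw [hρdef]; field_simp
  rw [pq, hJ0]
  simp only [Nat.cast_zero, zero_sub, pow_zero, mul_one, neg_div]
  linear_combination (-1 : ℝ) * hml - (2 / Real.pi * mu * J) * hBA
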